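/- arXiv:2411.18532 — 2 statements merged into one kernel-verified Lean document; each statement's English description precedes it below -/
import Mathlib

section
/- Let u be a classical solution of the constrained flow on [0,T]. Then the L² norm is conserved: for every t ∈ [0,T], ∫_Ω u(t,x)² dx = ∫_Ω u(0,x)² dx. -/
open MeasureTheory Set Filter

set_option maxHeartbeats 1000000
noncomputable section

/-- The domain: open ball of radius `R` in `ℝ^d`. -/
def Om (d : ℕ) (R : ℝ) : Set (EuclideanSpace ℝ (Fin d)) := Metric.ball 0 R

/-- Laplacian as the sum of second directional derivatives along the standard basis. -/
def lapl {d : ℕ} (w : EuclideanSpace ℝ (Fin d) → ℝ) (x : EuclideanSpace ℝ (Fin d)) : ℝ :=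
  ∑ i : Fin d, fderiv ℝ (fun y => fderiv ℝ w y (EuclideanSpace.single i 1)) x
    (EuclideanSpace.single i 1)

/-- The nonlocal coefficient `μ[w]` over a region `Ω`. -/
def muF {d : ℕ} (Ω : Set (EuclideanSpace ℝ (Fin d))) (σ ω : ℝ)
    (w : EuclideanSpace ℝ (Fin d) → ℝ) : ℝ :=
  ((∫ x in Ω, ‖fderiv ℝ w x‖ ^ 2) + ω * ∫ x in Ω, (w x) ^ 2) /
    ∫ x in Ω, |w x| ^ (2 * σ + 2)

/-- The functional `F[w]` over a region `Ω`. -/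
def FF {d : ℕ} (Ω : Set (EuclideanSpace ℝ (Fin d))) (σ ω : ℝ)
    (w : EuclideanSpace ℝ (Fin d) → ℝ) : ℝ :=
  ((∫ x in Ω, ‖fderiv ℝ w x‖ ^ 2) + ω * ∫ x in Ω, (w x) ^ 2) /
    (∫ x in Ω, |w x| ^ (2 * σ + 2)) ^ (1 / (σ + 1))

/-- A classical solution of the constrained flow on the time interval `I`,
on the ball of radius `R`: smooth on an open neighbourhood of `I × closure Ω`,
vanishing on the lateral boundary, with positive `L^{2σ+2}` integral, satisfying
`∂ₜ u = Δu - ω u + μ[u] |u|^{2σ} u` on `Ω`. -/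
structure IsClassicalSolution (d : ℕ) (R σ ω : ℝ) (I : Set ℝ)
    (u : ℝ → EuclideanSpace ℝ (Fin d) → ℝ) : Prop where
  smooth : ∃ U : Set (ℝ × EuclideanSpace ℝ (Fin d)), IsOpen U ∧
      I ×ˢ closure (Om d R) ⊆ U ∧ ContDiffOn ℝ (⊤ : ℕ∞) (fun p => u p.1 p.2) U
  boundary : ∀ t ∈ I, ∀ x : EuclideanSpace ℝ (Fin d), ‖x‖ = R → u t x = 0
  posint : ∀ t ∈ I, 0 < ∫ x in Om d R, |u t x| ^ (2 * σ + 2)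
  flow : ∀ t ∈ I, ∀ x ∈ Om d R,
      deriv (fun s => u s x) t =
        lapl (u t) x - ω * u t x + muF (Om d R) σ ω (u t) * |u t x| ^ (2 * σ) * u t x




theorem slice_div_zero {n : ℕ} {R : ℝ} (hR : 0 < R) (i : Fin (n+1))
    (F : EuclideanSpace ℝ (Fin (n+1)) → ℝ) (W : Set (EuclideanSpace ℝ (Fin (n+1))))
    (hWo : IsOpen W) (hWs : Metric.closedBall 0 R ⊆ W)
    (hF : ContDiffOn ℝ 1 F W) (hb : ∀ x, ‖x‖ = R → F x = 0) :
    ∫ x in Metric.ball (0 : EuclideanSpace ℝ (Fin (n+1))) R,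
      fderiv ℝ F x (EuclideanSpace.single i 1) = 0 := by
  set e : EuclideanSpace ℝ (Fin (n+1)) := EuclideanSpace.single i 1 with he
  set G : EuclideanSpace ℝ (Fin (n+1)) → ℝ := fun x => fderiv ℝ F x e with hG
  have hGc : ContinuousOn G W :=
    (hF.continuousOn_fderiv_of_isOpen hWo le_rfl).clm_apply continuousOn_const
  have hGint : Integrable ((Metric.ball (0 : EuclideanSpace ℝ (Fin (n+1))) R).indicator G) := by
    rw [integrable_indicator_iff measurableSet_ball]
    exact ((hGc.mono hWs).integrableOn_compact (isCompact_closedBall 0 R)).mono_set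
      Metric.ball_subset_closedBall
  -- the measure preserving equivalence  ℝ × (Fin n → ℝ) ≃ E
  set Ψ : (ℝ × (Fin n → ℝ)) ≃ᵐ EuclideanSpace ℝ (Fin (n+1)) :=
    (MeasurableEquiv.piFinSuccAbove (fun _ => ℝ) i).symm.trans
      (MeasurableEquiv.toLp 2 (Fin (n+1) → ℝ)) with hΨ
  have hmp : MeasurePreserving (⇑Ψ) volume volume := by
    have h1 := (volume_preserving_piFinSuccAbove (fun _ : Fin (n+1) => ℝ) i).symm _
    have h2 := (EuclideanSpace.volume_preserving_symm_measurableEquiv_toLp (Fin (n+1))).symm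
    exact h2.comp h1
  have key : ∫ x in Metric.ball (0 : EuclideanSpace ℝ (Fin (n+1))) R, G x
      = ∫ p : ℝ × (Fin n → ℝ),
          (Metric.ball (0 : EuclideanSpace ℝ (Fin (n+1))) R).indicator G (Ψ p) := by
    rw [← integral_indicator measurableSet_ball]
    exact (hmp.integral_comp Ψ.measurableEmbedding _).symm
  rw [key]
  have hintc : Integrable (fun p : ℝ × (Fin n → ℝ) =>
      (Metric.ball (0 : EuclideanSpace ℝ (Fin (n+1))) R).indicator G (Ψ p)) volume :=
    (hmp.integrable_comp_emb Ψ.measurableEmbedding).2 hGint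
  have hfub := integral_prod_symm (μ := (volume : Measure ℝ)) (ν := (volume : Measure (Fin n → ℝ)))
      (fun p => (Metric.ball (0 : EuclideanSpace ℝ (Fin (n+1))) R).indicator G (Ψ p))
      (by rwa [← Measure.volume_eq_prod])
  rw [← Measure.volume_eq_prod] at hfub
  rw [hfub]
  have inner0 : ∀ y : Fin n → ℝ, ∫ a : ℝ,
      (Metric.ball (0 : EuclideanSpace ℝ (Fin (n+1))) R).indicator G (Ψ (a, y)) = 0 := by
    intro y
    set c : ℝ := ∑ j, (y j) ^ 2 with hc
    have hc0 : 0 ≤ c := Finset.sum_nonneg fun j _ => sq_nonneg _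
    set x : ℝ → EuclideanSpace ℝ (Fin (n+1)) := fun a => Ψ (a, y) with hx
    -- coordinates of x a
    have hxco : ∀ (a : ℝ) (j : Fin (n+1)), x a j = Fin.insertNth (α := fun _ => ℝ) i a y j := by
      intro a j
      simp [hx, hΨ, MeasurableEquiv.coe_toLp, MeasurableEquiv.piFinSuccAbove_symm_apply]
    have hxnorm : ∀ a, ‖x a‖ = Real.sqrt (a ^ 2 + c) := by
      intro a
      rw [EuclideanSpace.norm_eq]
      congr 1
      rw [Fin.sum_univ_succAbove (fun j => ‖x a j‖ ^ 2) i]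
      simp only [hxco, Fin.insertNth_apply_same, Fin.insertNth_apply_succAbove,
        Real.norm_eq_abs, sq_abs]
      rfl
    -- x is affine
    have hxa : ∀ a, x a = x 0 + a • e := by
      intro a
      ext j
      have h1 := hxco a j
      have h2 := hxco 0 j
      show x a j = x 0 j + a * e j
      rw [h1, h2]
      rcases eq_or_ne j i with rfl | hne
      · simp [he, EuclideanSpace.single_apply]
      · obtain ⟨k, rfl⟩ := Fin.exists_succAbove_eq hne
        simp [he, EuclideanSpace.single_apply, (Fin.succAbove_ne i k)]
    have hxeq : x = fun a : ℝ => x 0 + a • e := funext hxa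
    have hxcont : Continuous x := by
      rw [hxeq]; exact continuous_const.add (continuous_id.smul continuous_const)
    have hxd : ∀ a : ℝ, HasDerivAt x e a := by
      intro a
      rw [hxeq]
      simpa using ((hasDerivAt_id a).smul_const e).const_add (x 0)
    have hpre : x ⁻¹' (Metric.ball (0 : EuclideanSpace ℝ (Fin (n+1))) R)
        = {a : ℝ | a ^ 2 + c < R ^ 2} := by
      ext a
      simp only [Set.mem_preimage, Metric.mem_ball, dist_zero_right, Set.mem_setOf_eq, hxnorm]
      rw [Real.sqrt_lt' hR]
    have hrw : (fun a : ℝ => (Metric.ball (0 : EuclideanSpace ℝ (Fin (n+1))) R).indicator G (x a))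
        = (x ⁻¹' (Metric.ball (0 : EuclideanSpace ℝ (Fin (n+1))) R)).indicator (G ∘ x) := by
      funext a
      exact (Set.indicator_comp_right x).symm
    show ∫ a : ℝ, (Metric.ball (0 : EuclideanSpace ℝ (Fin (n+1))) R).indicator G (x a) = 0
    rw [hrw, hpre]
    by_cases hcR : R ^ 2 ≤ c
    · have : {a : ℝ | a ^ 2 + c < R ^ 2} = ∅ := by
        ext a; simp only [Set.mem_setOf_eq, Set.mem_empty_iff_false, iff_false, not_lt]
        nlinarith [sq_nonneg a]
      rw [this]; simp
    · push_neg at hcR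
      set h : ℝ := Real.sqrt (R ^ 2 - c) with hh
      have hh0 : 0 < h := Real.sqrt_pos.2 (by linarith)
      have hh2 : h ^ 2 = R ^ 2 - c := Real.sq_sqrt (by linarith)
      have hset : {a : ℝ | a ^ 2 + c < R ^ 2} = Set.Ioo (-h) h := by
        ext a
        simp only [Set.mem_setOf_eq, Set.mem_Ioo]
        constructor
        · intro ha
          exact ⟨by nlinarith [sq_nonneg (a + h)], by nlinarith [sq_nonneg (a - h)]⟩
        · intro ⟨h1, h2⟩
          nlinarith
      rw [hset, integral_indicator measurableSet_Ioo]
      simp only [Function.comp_def]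
      have hxW : ∀ a ∈ Set.Icc (-h) h, x a ∈ Metric.closedBall (0 : EuclideanSpace ℝ (Fin (n+1))) R := by
        intro a ha
        rw [Metric.mem_closedBall, dist_zero_right, hxnorm]
        have h1 : a ^ 2 + c ≤ R ^ 2 := by
          rcases ha with ⟨ha1, ha2⟩; nlinarith
        calc Real.sqrt (a ^ 2 + c) ≤ Real.sqrt (R ^ 2) := Real.sqrt_le_sqrt h1
        _ = R := Real.sqrt_sq hR.le
      have huIcc : Set.uIcc (-h) h = Set.Icc (-h) h := Set.uIcc_of_le (by linarith)
      have gderiv : ∀ a ∈ Set.uIcc (-h) h, HasDerivAt (fun b => F (x b)) (G (x a)) a := by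
        intro a ha
        rw [huIcc] at ha
        have hFd : DifferentiableAt ℝ F (x a) :=
          (hF.differentiableOn one_ne_zero).differentiableAt (hWo.mem_nhds (hWs (hxW a ha)))
        exact hFd.hasFDerivAt.comp_hasDerivAt a (hxd a)
      have hGxc : ContinuousOn (fun a => G (x a)) (Set.uIcc (-h) h) := by
        rw [huIcc]
        exact hGc.comp hxcont.continuousOn (fun a ha => hWs (hxW a ha))
      have hII : IntervalIntegrable (fun a => G (x a)) volume (-h) h := hGxc.intervalIntegrable
      have hftc := intervalIntegral.integral_eq_sub_of_hasDerivAt gderiv hII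
      have hIoo : ∫ a in Set.Ioo (-h) h, G (x a) = ∫ a in (-h)..h, G (x a) := by
        rw [intervalIntegral.integral_of_le (by linarith : -h ≤ h),
          MeasureTheory.integral_Ioc_eq_integral_Ioo]
      rw [hIoo, hftc]
      have hFh : F (x h) = 0 := by
        apply hb
        rw [hxnorm]
        rw [show h ^ 2 + c = R ^ 2 by linarith]
        exact Real.sqrt_sq hR.le
      have hFmh : F (x (-h)) = 0 := by
        apply hb
        rw [hxnorm]
        rw [show (-h) ^ 2 + c = R ^ 2 by rw [neg_pow]; ring_nf; nlinarith [hh2]]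
        exact Real.sqrt_sq hR.le
      rw [hFh, hFmh, sub_zero]
  rw [integral_congr_ae (Eventually.of_forall (fun y => inner0 y))]
  simp




theorem norm_clm_sq {d : ℕ} (L : EuclideanSpace ℝ (Fin d) →L[ℝ] ℝ) :
    ‖L‖ ^ 2 = ∑ i : Fin d, (L (EuclideanSpace.single i 1)) ^ 2 := by
  set v := (InnerProductSpace.toDual ℝ (EuclideanSpace ℝ (Fin d))).symm L with hv
  have hnorm : ‖L‖ = ‖v‖ := (LinearIsometryEquiv.norm_map _ L).symm
  have hvi : ∀ i, v i = L (EuclideanSpace.single i 1) := by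
    intro i
    have h1 := InnerProductSpace.toDual_symm_apply (𝕜 := ℝ) (y := L)
      (x := EuclideanSpace.single i (1:ℝ))
    rw [← h1, real_inner_comm]
    simp [EuclideanSpace.inner_single_left, hv]
  rw [hnorm, EuclideanSpace.norm_eq, Real.sq_sqrt (by positivity)]
  exact Finset.sum_congr rfl fun i _ => by rw [Real.norm_eq_abs, sq_abs, hvi i]

theorem green {n : ℕ} {R : ℝ} (hR : 0 < R)
    (w : EuclideanSpace ℝ (Fin (n+1)) → ℝ) (W : Set (EuclideanSpace ℝ (Fin (n+1))))
    (hWo : IsOpen W) (hWs : Metric.closedBall 0 R ⊆ W)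
    (hw : ContDiffOn ℝ (⊤ : ℕ∞) w W) (hb : ∀ x, ‖x‖ = R → w x = 0) :
    ∫ x in Metric.ball (0 : EuclideanSpace ℝ (Fin (n+1))) R, w x * lapl w x
      = - ∫ x in Metric.ball (0 : EuclideanSpace ℝ (Fin (n+1))) R, ‖fderiv ℝ w x‖ ^ 2 := by
  have hball : Metric.ball (0 : EuclideanSpace ℝ (Fin (n+1))) R ⊆ W :=
    Metric.ball_subset_closedBall.trans hWs
  have hw1 : ContDiffOn ℝ 1 w W := hw.of_le (by exact_mod_cast le_top)
  set e : Fin (n+1) → EuclideanSpace ℝ (Fin (n+1)) := fun i => EuclideanSpace.single i 1 with he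
  set g : Fin (n+1) → EuclideanSpace ℝ (Fin (n+1)) → ℝ :=
    fun i x => fderiv ℝ w x (EuclideanSpace.single i 1) with hg
  have hgi : ∀ i, ContDiffOn ℝ 1 (g i) W := by
    intro i
    exact (hw.fderiv_of_isOpen hWo (WithTop.coe_le_coe.2 le_top)).clm_apply contDiffOn_const
  have hFi : ∀ i, ContDiffOn ℝ 1 (fun x => w x * g i x) W := fun i => hw1.mul (hgi i)
  -- integrability helper
  have intball : ∀ f : EuclideanSpace ℝ (Fin (n+1)) → ℝ, ContinuousOn f W →
      IntegrableOn f (Metric.ball (0 : EuclideanSpace ℝ (Fin (n+1))) R) := by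
    intro f hf
    exact (((hf.mono hWs)).integrableOn_compact (isCompact_closedBall 0 R)).mono_set
      Metric.ball_subset_closedBall
  have hzero : ∀ i, ∫ x in Metric.ball (0 : EuclideanSpace ℝ (Fin (n+1))) R,
      fderiv ℝ (fun y => w y * g i y) x (EuclideanSpace.single i 1) = 0 := by
    intro i
    exact slice_div_zero hR i _ W hWo hWs (hFi i) (fun x hx => by rw [hb x hx, zero_mul])
  -- pointwise identity on W
  have hptw : ∀ x ∈ W, ∀ i, fderiv ℝ (fun y => w y * g i y) x (EuclideanSpace.single i 1)
      = w x * (fderiv ℝ (g i) x (EuclideanSpace.single i 1)) + (g i x) ^ 2 := by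
    intro x hx i
    have hwd : DifferentiableAt ℝ w x :=
      (hw1.differentiableOn one_ne_zero).differentiableAt (hWo.mem_nhds hx)
    have hgd : DifferentiableAt ℝ (g i) x :=
      ((hgi i).differentiableOn one_ne_zero).differentiableAt (hWo.mem_nhds hx)
    rw [fderiv_fun_mul hwd hgd]
    simp only [ContinuousLinearMap.add_apply, ContinuousLinearMap.smul_apply, smul_eq_mul]
    have hge : (fderiv ℝ w x) (EuclideanSpace.single i 1) = g i x := rfl
    rw [hge]
    ring
  -- continuity of each integrand
  have hcont_i : ∀ i, ContinuousOn
      (fun x => fderiv ℝ (fun y => w y * g i y) x (EuclideanSpace.single i 1)) W := by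
    intro i
    exact ((hFi i).continuousOn_fderiv_of_isOpen hWo le_rfl).clm_apply continuousOn_const
  have hsum : ∫ x in Metric.ball (0 : EuclideanSpace ℝ (Fin (n+1))) R,
      (w x * lapl w x + ‖fderiv ℝ w x‖ ^ 2) = 0 := by
    have : ∀ x ∈ Metric.ball (0 : EuclideanSpace ℝ (Fin (n+1))) R,
        w x * lapl w x + ‖fderiv ℝ w x‖ ^ 2
        = ∑ i : Fin (n+1), fderiv ℝ (fun y => w y * g i y) x (EuclideanSpace.single i 1) := by
      intro x hx
      have hx' := hball hx
      rw [Finset.sum_congr rfl (fun i _ => hptw x hx' i)]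
      rw [Finset.sum_add_distrib, ← Finset.mul_sum, norm_clm_sq (fderiv ℝ w x)]
      rfl
    rw [setIntegral_congr_fun measurableSet_ball this]
    rw [integral_finset_sum]
    · exact Finset.sum_eq_zero fun i _ => hzero i
    · exact fun i _ => intball _ (hcont_i i)
  have hint1 : IntegrableOn (fun x => w x * lapl w x)
      (Metric.ball (0 : EuclideanSpace ℝ (Fin (n+1))) R) := by
    apply intball
    apply (hw1.continuousOn).mul
    apply continuousOn_finset_sum
    intro i _
    exact ((hgi i).continuousOn_fderiv_of_isOpen hWo le_rfl).clm_apply continuousOn_const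
  have hint2 : IntegrableOn (fun x => ‖fderiv ℝ w x‖ ^ 2)
      (Metric.ball (0 : EuclideanSpace ℝ (Fin (n+1))) R) := by
    apply intball
    exact ((hw.continuousOn_fderiv_of_isOpen hWo (by exact_mod_cast le_top)).norm).pow 2
  rw [integral_add hint1 hint2] at hsum
  linarith

theorem mass_conservation_aux {n : ℕ} (R : ℝ) (hR : 0 < R) (σ ω T : ℝ)
    (hσ : 0 < σ) (hT : 0 ≤ T)
    (u : ℝ → EuclideanSpace ℝ (Fin (n+1)) → ℝ)
    (hu : IsClassicalSolution (n+1) R σ ω (Set.Icc 0 T) u) :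
    ∀ t ∈ Set.Icc (0 : ℝ) T,
      ∫ x in Om (n+1) R, (u t x) ^ 2 = ∫ x in Om (n+1) R, (u 0 x) ^ 2 := by
  have hOm : Om (n+1) R = Metric.ball (0 : (EuclideanSpace ℝ (Fin (n+1)))) R := rfl
  obtain ⟨U, hUo, hUsub, hUsm⟩ := hu.smooth
  have hKU : (Icc (0:ℝ) T) ×ˢ Metric.closedBall (0 : (EuclideanSpace ℝ (Fin (n+1)))) R ⊆ U := by
    rw [← closure_ball (0:(EuclideanSpace ℝ (Fin (n+1)))) hR.ne']
    exact hUsub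
  obtain ⟨δ, hδ0, hδsub⟩ :=
    (isCompact_Icc.prod (isCompact_closedBall (0:(EuclideanSpace ℝ (Fin (n+1)))) R)).exists_thickening_subset_open hUo hKU
  -- the open tube V inside U
  have hVU : (Ioo (-δ) (T+δ)) ×ˢ Metric.ball (0:(EuclideanSpace ℝ (Fin (n+1)))) (R+δ) ⊆ U := by
    rintro ⟨s, x⟩ ⟨hs, hx⟩
    apply hδsub
    rw [Metric.mem_thickening_iff]
    refine ⟨(min (max s 0) T, if hxR : ‖x‖ ≤ R then x else (R / ‖x‖) • x),
      ⟨⟨le_min (le_max_right s 0) hT, min_le_right _ _⟩, ?_⟩, ?_⟩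
    · dsimp only
      split_ifs with hxR
      · exact Metric.mem_closedBall.2 (by rwa [dist_zero_right])
      · push_neg at hxR
        have hx0 : 0 < ‖x‖ := lt_trans hR hxR
        rw [Metric.mem_closedBall, dist_zero_right, norm_smul, Real.norm_eq_abs,
          abs_of_nonneg (by positivity), div_mul_cancel₀ _ hx0.ne']
    · rw [Prod.dist_eq]
      rcases hs with ⟨hs1, hs2⟩
      have hxRδ : ‖x‖ < R + δ := mem_ball_zero_iff.1 hx
      apply max_lt
      · rw [Real.dist_eq]
        rcases le_total s 0 with h0 | h0
        · rw [max_eq_right h0, min_eq_left hT, abs_of_nonpos (by linarith)]; linarith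
        · rw [max_eq_left h0]
          rcases le_total s T with h1 | h1
          · rw [min_eq_left h1]; simpa using hδ0
          · rw [min_eq_right h1, abs_of_nonneg (by linarith)]; linarith
      · dsimp only
        split_ifs with hxR
        · simpa [dist_self] using hδ0
        · push_neg at hxR
          have hx0 : 0 < ‖x‖ := lt_trans hR hxR
          rw [dist_eq_norm]
          have hsm : x - (R / ‖x‖) • x = (1 - R / ‖x‖) • x := by rw [sub_smul, one_smul]
          have h1 : (0:ℝ) ≤ 1 - R / ‖x‖ := by
            rw [sub_nonneg, div_le_one hx0]; exact hxR.le
          rw [hsm, norm_smul, Real.norm_eq_abs, abs_of_nonneg h1, sub_mul, one_mul,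
            div_mul_cancel₀ _ hx0.ne']
          linarith
  set f : ℝ × (EuclideanSpace ℝ (Fin (n+1))) → ℝ := fun p => u p.1 p.2 with hf
  have hUsm' : ContDiffOn ℝ (⊤:ℕ∞) f U := by rw [hf]; exact hUsm
  have hdiffU : ∀ p ∈ U, DifferentiableAt ℝ f p := fun p hp =>
    (hUsm'.differentiableOn (by simp)).differentiableAt (hUo.mem_nhds hp)
  set ut : ℝ → (EuclideanSpace ℝ (Fin (n+1))) → ℝ := fun s x => fderiv ℝ f (s, x) ((1:ℝ), (0:(EuclideanSpace ℝ (Fin (n+1))))) with hut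
  have hderivt : ∀ s x, ((s, x) : ℝ × (EuclideanSpace ℝ (Fin (n+1)))) ∈ U → HasDerivAt (fun s => u s x) (ut s x) s := by
    intro s x hp
    have h1 : HasDerivAt (fun r : ℝ => ((r, x) : ℝ × (EuclideanSpace ℝ (Fin (n+1))))) ((1:ℝ), (0:(EuclideanSpace ℝ (Fin (n+1))))) s :=
      (hasDerivAt_id s).prodMk (hasDerivAt_const s x)
    exact (hdiffU _ hp).hasFDerivAt.comp_hasDerivAt s h1
  have hutc : ContinuousOn (fun p : ℝ × (EuclideanSpace ℝ (Fin (n+1))) => fderiv ℝ f p ((1:ℝ), (0:(EuclideanSpace ℝ (Fin (n+1)))))) U :=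
    (hUsm'.continuousOn_fderiv_of_isOpen hUo (by exact_mod_cast le_top)).clm_apply
      continuousOn_const
  -- membership helpers
  have hmemV : ∀ s ∈ Ioo (-δ) (T+δ), ∀ x ∈ Metric.ball (0:(EuclideanSpace ℝ (Fin (n+1)))) R, ((s, x) : ℝ × (EuclideanSpace ℝ (Fin (n+1)))) ∈ U :=
    fun s hs x hx => hVU ⟨hs, Metric.ball_subset_ball (by linarith) hx⟩
  have hIccIoo : ∀ s ∈ Icc (0:ℝ) T, s ∈ Ioo (-δ) (T+δ) :=
    fun s hs => ⟨by linarith [hs.1], by linarith [hs.2]⟩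
  -- derivative of the mass
  have hmass : ∀ t ∈ Icc (0:ℝ) T, HasDerivAt (fun s => ∫ x in Om (n+1) R, (u s x)^2)
      (∫ x in Om (n+1) R, 2 * u t x * ut t x) t := by
    intro t ht
    have hε : ∀ s ∈ Metric.ball t (δ/2), s ∈ Ioo (-δ) (T+δ) := by
      intro s hs
      rw [Metric.mem_ball, Real.dist_eq] at hs
      have := abs_lt.1 hs
      constructor <;> [linarith [ht.1, this.1, this.2]; linarith [ht.2, this.1, this.2]]
    have hIccKc : ∀ s ∈ Icc (t - δ/2) (t + δ/2), s ∈ Ioo (-δ) (T+δ) := by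
      intro s hs
      constructor <;> [linarith [ht.1, hs.1]; linarith [ht.2, hs.2]]
    have hKcU : (Icc (t - δ/2) (t + δ/2)) ×ˢ Metric.closedBall (0:(EuclideanSpace ℝ (Fin (n+1)))) R ⊆ U := by
      rintro ⟨s, x⟩ ⟨hs, hx⟩
      exact hVU ⟨hIccKc s hs, Metric.closedBall_subset_ball (by linarith) hx⟩
    obtain ⟨C, hC⟩ := (isCompact_Icc.prod (isCompact_closedBall (0:(EuclideanSpace ℝ (Fin (n+1)))) R)).exists_bound_of_continuousOn
      (show ContinuousOn (fun p : ℝ × (EuclideanSpace ℝ (Fin (n+1))) => 2 * f p * fderiv ℝ f p ((1:ℝ), (0:(EuclideanSpace ℝ (Fin (n+1))))))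
        ((Icc (t - δ/2) (t + δ/2)) ×ˢ Metric.closedBall (0:(EuclideanSpace ℝ (Fin (n+1)))) R) from
        (continuousOn_const.mul (hUsm'.continuousOn.mono hKcU)).mul (hutc.mono hKcU))
    rw [hOm]
    have key := hasDerivAt_integral_of_dominated_loc_of_deriv_le
      (μ := volume.restrict (Metric.ball (0:(EuclideanSpace ℝ (Fin (n+1)))) R))
      (F := fun s x => (u s x)^2) (F' := fun s x => 2 * u s x * ut s x)
      (x₀ := t) (bound := fun _ => C) (Metric.ball_mem_nhds t (half_pos hδ0))
      ?_ ?_ ?_ ?_ ?_ ?_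
    · exact key.2
    · -- measurability
      filter_upwards [(isOpen_Ioo (a := -δ) (b := T+δ)).mem_nhds (hIccIoo t ht)] with s hs
      have : ContinuousOn (fun x : (EuclideanSpace ℝ (Fin (n+1))) => (u s x)^2) (Metric.ball (0:(EuclideanSpace ℝ (Fin (n+1)))) R) := by
        apply ContinuousOn.pow
        exact hUsm'.continuousOn.comp (Continuous.continuousOn (continuous_const.prodMk continuous_id))
          (fun x hx => hmemV s hs x hx)
      exact this.aestronglyMeasurable measurableSet_ball
    · -- integrability at t
      have : ContinuousOn (fun x : (EuclideanSpace ℝ (Fin (n+1))) => (u t x)^2) (Metric.closedBall (0:(EuclideanSpace ℝ (Fin (n+1)))) R) := by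
        apply ContinuousOn.pow
        exact hUsm'.continuousOn.comp (Continuous.continuousOn (continuous_const.prodMk continuous_id))
          (fun x hx => hKU ⟨ht, hx⟩)
      exact (this.integrableOn_compact (isCompact_closedBall (0:(EuclideanSpace ℝ (Fin (n+1)))) R)).mono_set
        Metric.ball_subset_closedBall
    · -- measurability of F' t
      have : ContinuousOn (fun x : (EuclideanSpace ℝ (Fin (n+1))) => 2 * u t x * ut t x) (Metric.ball (0:(EuclideanSpace ℝ (Fin (n+1)))) R) := by
        apply ContinuousOn.mul
        · exact continuousOn_const.mul (hUsm'.continuousOn.comp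
            (Continuous.continuousOn (continuous_const.prodMk continuous_id)) (fun x hx => hmemV t (hIccIoo t ht) x hx))
        · exact hutc.comp (Continuous.continuousOn (continuous_const.prodMk continuous_id))
            (fun x hx => hmemV t (hIccIoo t ht) x hx)
      exact this.aestronglyMeasurable measurableSet_ball
    · -- bound
      rw [ae_restrict_iff' measurableSet_ball]
      refine Eventually.of_forall (fun x hx s hs => ?_)
      have hsIcc : s ∈ Icc (t - δ/2) (t + δ/2) := by
        rw [Metric.mem_ball, Real.dist_eq] at hs
        have := abs_lt.1 hs
        exact ⟨by linarith [this.1], by linarith [this.2]⟩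
      exact hC (s, x) ⟨hsIcc, Metric.ball_subset_closedBall hx⟩
    · exact integrableOn_const measure_ball_lt_top.ne
    · -- differentiability
      rw [ae_restrict_iff' measurableSet_ball]
      refine Eventually.of_forall (fun x hx s hs => ?_)
      have hder := hderivt s x (hmemV s (hε s hs) x hx)
      simpa using hder.fun_pow 2
  -- the derivative vanishes
  have hzero : ∀ t ∈ Icc (0:ℝ) T, (∫ x in Om (n+1) R, 2 * u t x * ut t x) = 0 := by
    intro t ht
    have hballW : Metric.closedBall (0:(EuclideanSpace ℝ (Fin (n+1)))) R ⊆ Metric.ball (0:(EuclideanSpace ℝ (Fin (n+1)))) (R+δ) :=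
      Metric.closedBall_subset_ball (by linarith)
    have hwsm : ContDiffOn ℝ (⊤:ℕ∞) (u t) (Metric.ball (0:(EuclideanSpace ℝ (Fin (n+1)))) (R+δ)) := by
      have := hUsm'.comp ((contDiff_const.prodMk contDiff_id).contDiffOn
        (s := Metric.ball (0:(EuclideanSpace ℝ (Fin (n+1)))) (R+δ)))
        (fun x hx => hVU ⟨hIccIoo t ht, hx⟩)
      exact this
    have hgreen := green hR (u t) _ Metric.isOpen_ball hballW hwsm (hu.boundary t ht)
    have hposint := hu.posint t ht
    have hmu : muF (Om (n+1) R) σ ω (u t) * ∫ x in Om (n+1) R, |u t x| ^ (2*σ+2)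
        = (∫ x in Om (n+1) R, ‖fderiv ℝ (u t) x‖^2) + ω * ∫ x in Om (n+1) R, (u t x)^2 := by
      rw [muF]
      exact div_mul_cancel₀ _ hposint.ne'
    set M := muF (Om (n+1) R) σ ω (u t) with hM
    -- integrability helpers
    have intball : ∀ g : (EuclideanSpace ℝ (Fin (n+1))) → ℝ, ContinuousOn g (Metric.ball (0:(EuclideanSpace ℝ (Fin (n+1)))) (R+δ)) →
        IntegrableOn g (Metric.ball (0:(EuclideanSpace ℝ (Fin (n+1)))) R) := fun g hg =>
      ((hg.mono hballW).integrableOn_compact (isCompact_closedBall (0:(EuclideanSpace ℝ (Fin (n+1)))) R)).mono_set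
        Metric.ball_subset_closedBall
    have hcw : ContinuousOn (u t) (Metric.ball (0:(EuclideanSpace ℝ (Fin (n+1)))) (R+δ)) := hwsm.continuousOn
    have hclapl : ContinuousOn (lapl (u t)) (Metric.ball (0:(EuclideanSpace ℝ (Fin (n+1)))) (R+δ)) := by
      unfold lapl
      apply continuousOn_finset_sum
      intro i _
      have hgi : ContDiffOn ℝ 1 (fun y => fderiv ℝ (u t) y (EuclideanSpace.single i 1))
          (Metric.ball (0:(EuclideanSpace ℝ (Fin (n+1)))) (R+δ)) :=
        (hwsm.fderiv_of_isOpen Metric.isOpen_ball (WithTop.coe_le_coe.2 le_top)).clm_apply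
          contDiffOn_const
      exact (hgi.continuousOn_fderiv_of_isOpen Metric.isOpen_ball le_rfl).clm_apply
        continuousOn_const
    have hcabs : ContinuousOn (fun x => |u t x| ^ (2*σ+2)) (Metric.ball (0:(EuclideanSpace ℝ (Fin (n+1)))) (R+δ)) :=
      (hcw.abs).rpow_const (fun x _ => Or.inr (by positivity))
    have hint1 : IntegrableOn (fun x => 2 * (u t x * lapl (u t) x)) (Metric.ball (0:(EuclideanSpace ℝ (Fin (n+1)))) R) :=
      intball _ (continuousOn_const.mul (hcw.mul hclapl))
    have hint2 : IntegrableOn (fun x => (-(2*ω)) * (u t x)^2) (Metric.ball (0:(EuclideanSpace ℝ (Fin (n+1)))) R) :=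
      intball _ (continuousOn_const.mul (hcw.pow 2))
    have hint3 : IntegrableOn (fun x => (2 * M) * |u t x| ^ (2*σ+2)) (Metric.ball (0:(EuclideanSpace ℝ (Fin (n+1)))) R) :=
      intball _ (continuousOn_const.mul hcabs)
    have heq : EqOn (fun x => 2 * u t x * ut t x)
        (fun x => 2 * (u t x * lapl (u t) x) + ((-(2*ω)) * (u t x)^2
          + (2 * M) * |u t x| ^ (2*σ+2))) (Om (n+1) R) := by
      intro x hx
      have hder := (hderivt t x (hmemV t (hIccIoo t ht) x hx)).deriv
      have hflow := hu.flow t ht x hx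
      have hutval : ut t x = lapl (u t) x - ω * u t x + M * |u t x| ^ (2*σ) * u t x := by
        rw [← hder, hflow, hM]
      have habs : |u t x| ^ (2*σ) * (u t x * u t x) = |u t x| ^ (2*σ+2) := by
        rw [Real.rpow_add' (abs_nonneg _) (by positivity), show ((2:ℝ)) = ((2:ℕ):ℝ) by norm_num,
          Real.rpow_natCast, sq_abs]
        ring
      show 2 * u t x * ut t x = _
      rw [hutval]
      have : 2 * u t x * (lapl (u t) x - ω * u t x + M * |u t x| ^ (2*σ) * u t x)
          = 2 * (u t x * lapl (u t) x) + ((-(2*ω)) * (u t x)^2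
            + (2 * M) * (|u t x| ^ (2*σ) * (u t x * u t x))) := by ring
      rw [this, habs]
    rw [hOm, setIntegral_congr_fun measurableSet_ball heq]
    have hint23 : IntegrableOn (fun x => (-(2*ω)) * (u t x)^2
        + (2 * M) * |u t x| ^ (2*σ+2)) (Metric.ball (0:(EuclideanSpace ℝ (Fin (n+1)))) R) :=
      hint2.add hint3
    rw [integral_add hint1 hint23, integral_add hint2 hint3,
      integral_const_mul, integral_const_mul, integral_const_mul]
    rw [hOm] at hmu
    linear_combination (2:ℝ) * hgreen + 2 * hmu
  -- conclude by constancy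
  intro t ht
  have hcont : ContinuousOn (fun s => ∫ x in Om (n+1) R, (u s x)^2) (Icc 0 T) :=
    fun s hs => ((hmass s hs).continuousAt).continuousWithinAt
  refine constant_of_has_deriv_right_zero hcont (fun s hs => ?_) t ht
  have h1 := hmass s ⟨hs.1, hs.2.le⟩
  rw [hzero s ⟨hs.1, hs.2.le⟩] at h1
  exact h1.hasDerivWithinAt


/-- conservation of the `L²` norm along the constrained flow. -/
theorem mass_conservation {d : ℕ} (hd : 1 ≤ d) (R : ℝ) (hR : 0 < R) (σ ω T : ℝ)
    (hσ : 0 < σ) (hσd : 3 ≤ d → σ < 2 / ((d : ℝ) - 2)) (hT : 0 ≤ T)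
    (u : ℝ → EuclideanSpace ℝ (Fin d) → ℝ)
    (hu : IsClassicalSolution d R σ ω (Set.Icc 0 T) u) :
    ∀ t ∈ Set.Icc (0 : ℝ) T,
      ∫ x in Om d R, (u t x) ^ 2 = ∫ x in Om d R, (u 0 x) ^ 2 := by
  obtain ⟨n, rfl⟩ : ∃ n : ℕ, d = n + 1 := ⟨d - 1, by omega⟩
  exact mass_conservation_aux R hR σ ω T hσ hT u hu
end
end

section
/- Let σ > 0, set r = 2σ+2 and r′ = (2σ+2)/(2σ+1), let Ω ⊆ ℝ^d be measurable, and let u, v : ℝ^d → ℝ be measurable with finite L^r(Ω) norms. Then ‖ |u|^{2σ}u − |v|^{2σ}v ‖_{L^{r′}(Ω)} ≤ (2σ+1) ( ‖u‖_{L^r(Ω)}^{2σ} + ‖v‖_{L^r(Ω)}^{2σ} ) ‖u − v‖_{L^r(Ω)}. -/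
open MeasureTheory Set Filter

lemma aux_deriv (σ : ℝ) (hσ : 0 < σ) (t : ℝ) :
    HasDerivAt (fun t : ℝ => |t| ^ (2*σ) * t) ((2*σ+1) * |t| ^ (2*σ)) t := by
  rcases lt_trichotomy t 0 with ht | rfl | ht
  · -- t < 0 : f = (-x)^(2σ) * x near t
    have hne : -t ≠ 0 := neg_ne_zero.mpr (ne_of_lt ht)
    have h1 : HasDerivAt (fun x : ℝ => (-x) ^ (2*σ)) (2*σ * (-t) ^ (2*σ-1) * (-1)) t :=
      (Real.hasDerivAt_rpow_const (p := 2*σ) (Or.inl hne)).comp t (hasDerivAt_neg t)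
    have h2 := h1.mul (hasDerivAt_id t)
    have heq : (fun x : ℝ => (-x) ^ (2*σ) * x) =ᶠ[nhds t] (fun x => |x| ^ (2*σ) * x) := by
      filter_upwards [Iio_mem_nhds ht] with x hx
      rw [abs_of_neg hx]
    have h3 := h2.congr_of_eventuallyEq heq.symm
    refine h3.congr_deriv (Eq.symm ?_)
    rw [abs_of_neg ht]
    have : 2*σ * (-t) ^ (2*σ-1) * (-1) * t = 2*σ * (-t) ^ (2*σ) := by
      have : (-t) ^ (2*σ-1) * (-t) = (-t) ^ (2*σ) := by
        rw [← Real.rpow_add_one hne]; ring_nf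
      calc 2*σ * (-t) ^ (2*σ-1) * (-1) * t = 2*σ * ((-t) ^ (2*σ-1) * (-t)) := by ring
        _ = 2*σ * (-t) ^ (2*σ) := by rw [this]
    rw [id_eq]
    linear_combination -this
  · -- t = 0
    have h0 : (2*σ+1) * |(0:ℝ)| ^ (2*σ) = 0 := by
      rw [abs_zero, Real.zero_rpow (by positivity)]; ring
    rw [h0]
    rw [hasDerivAt_iff_tendsto_slope]
    have hcont : Tendsto (fun x : ℝ => |x| ^ (2*σ)) (nhds 0) (nhds 0) := by
      have hc : Continuous fun x : ℝ => |x| ^ (2*σ) :=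
        continuous_abs.rpow_const (fun x => Or.inr (by positivity))
      have := hc.tendsto 0
      simpa only [abs_zero, Real.zero_rpow (show 2*σ ≠ 0 by positivity)] using this
    refine (hcont.mono_left nhdsWithin_le_nhds).congr' ?_
    filter_upwards [self_mem_nhdsWithin] with x hx
    simp only [mem_compl_iff, mem_singleton_iff] at hx
    rw [slope_def_field]
    field_simp [sub_zero]
    simp
  · -- t > 0 : f = x^(2σ+1) near t
    have h1 : HasDerivAt (fun x : ℝ => x ^ (2*σ+1)) ((2*σ+1) * t ^ (2*σ+1-1)) t :=
      Real.hasDerivAt_rpow_const (Or.inl (ne_of_gt ht))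
    have heq : (fun x : ℝ => x ^ (2*σ+1)) =ᶠ[nhds t] (fun x => |x| ^ (2*σ) * x) := by
      filter_upwards [Ioi_mem_nhds ht] with x hx
      rw [abs_of_pos hx, ← Real.rpow_add_one (ne_of_gt hx)]
    have h3 := h1.congr_of_eventuallyEq heq.symm
    refine h3.congr_deriv (Eq.symm ?_)
    rw [abs_of_pos ht]
    norm_num

lemma aux_pointwise (σ : ℝ) (hσ : 0 < σ) (a b : ℝ) :
    |(|a| ^ (2*σ) * a - |b| ^ (2*σ) * b)| ≤ (2*σ+1) * (|a| ^ (2*σ) + |b| ^ (2*σ)) * |a - b| := by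
  have hbound : ∀ t ∈ uIcc b a, ‖(2*σ+1) * |t| ^ (2*σ)‖ ≤ (2*σ+1) * (|a| ^ (2*σ) + |b| ^ (2*σ)) := by
    intro t ht
    rw [Real.norm_of_nonneg (by positivity)]
    have h1 : |t| ≤ max |b| |a| := by
      rcases mem_uIcc.mp ht with ⟨h1, h2⟩ | ⟨h1, h2⟩
      · exact abs_le_max_abs_abs h1 h2
      · exact (abs_le_max_abs_abs h1 h2).trans (le_of_eq (max_comm _ _))
    have h2 : |t| ^ (2*σ) ≤ (max |b| |a|) ^ (2*σ) :=
      Real.rpow_le_rpow (abs_nonneg t) h1 (by positivity)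
    have h3 : (max |b| |a|) ^ (2*σ) ≤ |a| ^ (2*σ) + |b| ^ (2*σ) := by
      rcases max_cases |b| |a| with ⟨he, _⟩ | ⟨he, _⟩ <;> rw [he] <;>
        [(nlinarith [Real.rpow_nonneg (abs_nonneg a) (2*σ)]);
         (nlinarith [Real.rpow_nonneg (abs_nonneg b) (2*σ)])]
    have := h2.trans h3
    nlinarith
  have key := (convex_uIcc b a).norm_image_sub_le_of_norm_hasDerivWithin_le
    (f := fun t : ℝ => |t| ^ (2*σ) * t) (f' := fun t : ℝ => (2*σ+1) * |t| ^ (2*σ))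
    (fun t _ => (aux_deriv σ hσ t).hasDerivWithinAt) hbound
    (left_mem_uIcc) (right_mem_uIcc)
  simpa [Real.norm_eq_abs] using key

lemma aux_add_rpow_le {x y p : ℝ} (hx : 0 ≤ x) (hy : 0 ≤ y) (hp : 0 ≤ p) :
    (x + y) ^ p ≤ 2 ^ p * (x ^ p + y ^ p) := by
  have h1 : x + y ≤ 2 * max x y := by
    rcases max_cases x y with ⟨he, h⟩ | ⟨he, h⟩ <;> rw [he] <;> linarith
  calc (x + y) ^ p ≤ (2 * max x y) ^ p :=
        Real.rpow_le_rpow (by positivity) h1 hp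
    _ = 2 ^ p * (max x y) ^ p := Real.mul_rpow (by norm_num) (le_max_of_le_left hx)
    _ ≤ 2 ^ p * (x ^ p + y ^ p) := by
        gcongr
        rcases max_cases x y with ⟨he, _⟩ | ⟨he, _⟩ <;> rw [he] <;>
          nlinarith [Real.rpow_nonneg hx p, Real.rpow_nonneg hy p]

lemma aux_memℒp {α : Type*} [MeasurableSpace α] {μ : Measure α} {f : α → ℝ}
    (hf : AEStronglyMeasurable f μ) {p : ℝ} (hp : 0 < p)
    (hint : Integrable (fun x => |f x| ^ p) μ) : MemLp f (ENNReal.ofReal p) μ := by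
  have hq0 : (ENNReal.ofReal p) ≠ 0 := by simp [hp, le_of_lt]
  have hqt : (ENNReal.ofReal p) ≠ ⊤ := ENNReal.ofReal_ne_top
  rw [← memLp_norm_rpow_iff hf hq0 hqt, ENNReal.div_self hq0 hqt, memLp_one_iff_integrable]
  simpa [Real.norm_eq_abs, ENNReal.toReal_ofReal hp.le, abs_abs,
    Real.abs_rpow_of_nonneg (abs_nonneg _)] using hint

lemma aux_minkowski {α : Type*} [MeasurableSpace α] {μ : Measure α} {f g : α → ℝ}
    (hf : AEStronglyMeasurable f μ) (hg : AEStronglyMeasurable g μ)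
    (hfn : ∀ x, 0 ≤ f x) (hgn : ∀ x, 0 ≤ g x) {p : ℝ} (hp : 1 ≤ p)
    (hfi : Integrable (fun x => f x ^ p) μ) (hgi : Integrable (fun x => g x ^ p) μ) :
    (∫ x, (f x + g x) ^ p ∂μ) ^ (1/p) ≤
      (∫ x, f x ^ p ∂μ) ^ (1/p) + (∫ x, g x ^ p ∂μ) ^ (1/p) := by
  have hp0 : 0 < p := lt_of_lt_of_le one_pos hp
  have hmf : MemLp f (ENNReal.ofReal p) μ := aux_memℒp hf hp0 (by
    simpa [fun x => abs_of_nonneg (hfn x)] using hfi)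
  have hmg : MemLp g (ENNReal.ofReal p) μ := aux_memℒp hg hp0 (by
    simpa [fun x => abs_of_nonneg (hgn x)] using hgi)
  have h1 : (1:ENNReal) ≤ ENNReal.ofReal p := by
    rw [ENNReal.one_le_ofReal]; exact hp
  have hq0 : (ENNReal.ofReal p) ≠ 0 := by simp [hp0, le_of_lt]
  have hqt : (ENNReal.ofReal p) ≠ ⊤ := ENNReal.ofReal_ne_top
  have htri := eLpNorm_add_le hmf.1 hmg.1 h1
  rw [(hmf.add hmg).eLpNorm_eq_integral_rpow_norm hq0 hqt,
    hmf.eLpNorm_eq_integral_rpow_norm hq0 hqt,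
    hmg.eLpNorm_eq_integral_rpow_norm hq0 hqt,
    ← ENNReal.ofReal_add (by positivity) (by positivity),
    ENNReal.ofReal_le_ofReal_iff (by positivity)] at htri
  simp only [ENNReal.toReal_ofReal hp0.le, Pi.add_apply, Real.norm_eq_abs] at htri
  calc (∫ x, (f x + g x) ^ p ∂μ) ^ (1/p)
      = (∫ x, |f x + g x| ^ p ∂μ) ^ (p⁻¹) := by
        rw [one_div]
        congr 1
        refine integral_congr_ae (Eventually.of_forall fun x => ?_)
        simp [abs_of_nonneg (add_nonneg (hfn x) (hgn x))]
    _ ≤ (∫ x, |f x| ^ p ∂μ) ^ p⁻¹ + (∫ x, |g x| ^ p ∂μ) ^ p⁻¹ := htri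
    _ = (∫ x, f x ^ p ∂μ) ^ (1/p) + (∫ x, g x ^ p ∂μ) ^ (1/p) := by
        rw [one_div]
        congr 2 <;>
        · refine integral_congr_ae (Eventually.of_forall fun x => ?_)
          simp [abs_of_nonneg (hfn x), abs_of_nonneg (hgn x)]

/-- `L^{r'}` estimate of the difference of the power nonlinearities,
with `r = 2σ+2` and `r' = (2σ+2)/(2σ+1)`. -/
theorem nonlinearity_difference_estimate {d : ℕ} (σ : ℝ) (hσ : 0 < σ)
    (Ω : Set (EuclideanSpace ℝ (Fin d))) (hΩ : MeasurableSet Ω)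
    (u v : EuclideanSpace ℝ (Fin d) → ℝ) (hu : Measurable u) (hv : Measurable v)
    (hur : IntegrableOn (fun x => |u x| ^ (2 * σ + 2)) Ω)
    (hvr : IntegrableOn (fun x => |v x| ^ (2 * σ + 2)) Ω) :
    (∫ x in Ω, |(|u x| ^ (2 * σ) * u x - |v x| ^ (2 * σ) * v x)| ^ ((2 * σ + 2) / (2 * σ + 1))) ^
        ((2 * σ + 1) / (2 * σ + 2)) ≤
      (2 * σ + 1) *
        (((∫ x in Ω, |u x| ^ (2 * σ + 2)) ^ (1 / (2 * σ + 2))) ^ (2 * σ) +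
          ((∫ x in Ω, |v x| ^ (2 * σ + 2)) ^ (1 / (2 * σ + 2))) ^ (2 * σ)) *
        (∫ x in Ω, |u x - v x| ^ (2 * σ + 2)) ^ (1 / (2 * σ + 2)) := by
  have hs : (0:ℝ) < 2 * σ := by positivity
  have hC : (0:ℝ) < 2 * σ + 1 := by positivity
  have hr : (0:ℝ) < 2 * σ + 2 := by positivity
  have hr' : (0:ℝ) < (2 * σ + 2) / (2 * σ + 1) := by positivity
  have hp0 : (1:ℝ) ≤ (2 * σ + 2) / (2 * σ) := by
    rw [le_div_iff₀ hs]; linarith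
  -- measurability
  have hmu2 : Measurable fun x => |u x| ^ (2 * σ) := hu.abs.pow measurable_const
  have hmv2 : Measurable fun x => |v x| ^ (2 * σ) := hv.abs.pow measurable_const
  have hmh : Measurable fun x => |u x| ^ (2 * σ) + |v x| ^ (2 * σ) := hmu2.add hmv2
  have hmw : Measurable fun x => |u x - v x| := (hu.sub hv).abs
  have hmF : Measurable fun x => |u x| ^ (2 * σ) * u x - |v x| ^ (2 * σ) * v x :=
    (hmu2.mul hu).sub (hmv2.mul hv)
  -- integrability of |u - v| ^ r
  have hw_int : Integrable (fun x => |u x - v x| ^ (2 * σ + 2)) (volume.restrict Ω) := by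
    refine Integrable.mono' ((hur.add hvr).const_mul (2 ^ (2 * σ + 2)))
      (hmw.pow measurable_const).aestronglyMeasurable (Eventually.of_forall fun x => ?_)
    rw [Real.norm_of_nonneg (by positivity)]
    calc |u x - v x| ^ (2 * σ + 2) ≤ (|u x| + |v x|) ^ (2 * σ + 2) :=
          Real.rpow_le_rpow (abs_nonneg _) (abs_sub _ _) hr.le
      _ ≤ 2 ^ (2 * σ + 2) * (|u x| ^ (2 * σ + 2) + |v x| ^ (2 * σ + 2)) :=
          aux_add_rpow_le (abs_nonneg _) (abs_nonneg _) hr.le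
  -- integrability of h ^ p0
  have hsu : (2 * σ) * ((2 * σ + 2) / (2 * σ)) = 2 * σ + 2 := by field_simp
  have hh_int : Integrable
      (fun x => (|u x| ^ (2 * σ) + |v x| ^ (2 * σ)) ^ ((2 * σ + 2) / (2 * σ)))
      (volume.restrict Ω) := by
    refine Integrable.mono' ((hur.add hvr).const_mul (2 ^ ((2 * σ + 2) / (2 * σ))))
      (hmh.pow measurable_const).aestronglyMeasurable (Eventually.of_forall fun x => ?_)
    rw [Real.norm_of_nonneg (by positivity)]
    calc (|u x| ^ (2 * σ) + |v x| ^ (2 * σ)) ^ ((2 * σ + 2) / (2 * σ))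
        ≤ 2 ^ ((2 * σ + 2) / (2 * σ)) *
            ((|u x| ^ (2 * σ)) ^ ((2 * σ + 2) / (2 * σ)) +
             (|v x| ^ (2 * σ)) ^ ((2 * σ + 2) / (2 * σ))) :=
          aux_add_rpow_le (by positivity) (by positivity) (by positivity)
      _ = 2 ^ ((2 * σ + 2) / (2 * σ)) * (|u x| ^ (2 * σ + 2) + |v x| ^ (2 * σ + 2)) := by
          rw [← Real.rpow_mul (abs_nonneg _), ← Real.rpow_mul (abs_nonneg _), hsu]
  -- conjugate exponents a = (2σ+1)/(2σ), b = 2σ+1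
  have hconj : ((2 * σ + 1) / (2 * σ)).HolderConjugate (2 * σ + 1) := by
    refine Real.holderConjugate_iff.mpr ⟨by rw [lt_div_iff₀ hs]; linarith, ?_⟩
    rw [inv_div, inv_eq_one_div, ← add_div, div_self (ne_of_gt hC)]
  -- MemLp facts for Hölder
  have hra : (2 * σ + 2) / (2 * σ + 1) * ((2 * σ + 1) / (2 * σ)) = (2 * σ + 2) / (2 * σ) := by
    field_simp
  have hrb : (2 * σ + 2) / (2 * σ + 1) * (2 * σ + 1) = 2 * σ + 2 := by
    field_simp
  have hmem_h : MemLp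
      (fun x => (|u x| ^ (2 * σ) + |v x| ^ (2 * σ)) ^ ((2 * σ + 2) / (2 * σ + 1)))
      (ENNReal.ofReal ((2 * σ + 1) / (2 * σ))) (volume.restrict Ω) := by
    refine aux_memℒp (hmh.pow measurable_const).aestronglyMeasurable (by positivity) ?_
    refine hh_int.congr (Eventually.of_forall fun x => ?_)
    beta_reduce
    have h0 : (0:ℝ) ≤ |u x| ^ (2 * σ) + |v x| ^ (2 * σ) := by positivity
    rw [abs_of_nonneg (Real.rpow_nonneg h0 _), ← Real.rpow_mul h0, hra]
  have hmem_w : MemLp (fun x => |u x - v x| ^ ((2 * σ + 2) / (2 * σ + 1)))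
      (ENNReal.ofReal (2 * σ + 1)) (volume.restrict Ω) := by
    refine aux_memℒp (hmw.pow measurable_const).aestronglyMeasurable hC ?_
    refine hw_int.congr (Eventually.of_forall fun x => ?_)
    beta_reduce
    rw [abs_of_nonneg (Real.rpow_nonneg (abs_nonneg _) _), ← Real.rpow_mul (abs_nonneg _), hrb]
  -- Hölder's inequality
  have hhold := integral_mul_le_Lp_mul_Lq_of_nonneg hconj
    (Eventually.of_forall fun x => by simp only [Pi.zero_apply]; positivity)
    (Eventually.of_forall fun x => by simp only [Pi.zero_apply]; positivity) hmem_h hmem_w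
  -- rewrite the two integrals inside Hölder
  have hXeq : ∫ x in Ω, ((|u x| ^ (2 * σ) + |v x| ^ (2 * σ)) ^ ((2 * σ + 2) / (2 * σ + 1)))
        ^ ((2 * σ + 1) / (2 * σ))
      = ∫ x in Ω, (|u x| ^ (2 * σ) + |v x| ^ (2 * σ)) ^ ((2 * σ + 2) / (2 * σ)) := by
    refine integral_congr_ae (Eventually.of_forall fun x => ?_)
    beta_reduce
    rw [← Real.rpow_mul (by positivity : (0:ℝ) ≤ |u x| ^ (2 * σ) + |v x| ^ (2 * σ)), hra]
  have hYeq : ∫ x in Ω, (|u x - v x| ^ ((2 * σ + 2) / (2 * σ + 1))) ^ (2 * σ + 1)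
      = ∫ x in Ω, |u x - v x| ^ (2 * σ + 2) := by
    refine integral_congr_ae (Eventually.of_forall fun x => ?_)
    beta_reduce
    rw [← Real.rpow_mul (abs_nonneg _), hrb]
  rw [hXeq, hYeq] at hhold
  -- integrability of the product h^{r'} * w^{r'}
  have hpqr : (1:ENNReal) / 1 = 1 / ENNReal.ofReal ((2 * σ + 1) / (2 * σ)) +
      1 / ENNReal.ofReal (2 * σ + 1) := by
    simp only [one_div, inv_one]
    rw [← ENNReal.ofReal_inv_of_pos (by positivity), ← ENNReal.ofReal_inv_of_pos hC,
      ← ENNReal.ofReal_add (by positivity) (by positivity),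
      show ((2 * σ + 1) / (2 * σ))⁻¹ + (2 * σ + 1)⁻¹ = 1 by field_simp,
      ENNReal.ofReal_one]
  have hk_int : Integrable
      (fun x => (|u x| ^ (2 * σ) + |v x| ^ (2 * σ)) ^ ((2 * σ + 2) / (2 * σ + 1)) *
        |u x - v x| ^ ((2 * σ + 2) / (2 * σ + 1))) (volume.restrict Ω) := by
    have := memLp_one_iff_integrable.mp (hmem_w.smul hmem_h (hpqr := ⟨by rw [inv_one]; simpa only [one_div, inv_one] using hpqr.symm⟩))
    exact this.congr (Eventually.of_forall fun x => by simp [smul_eq_mul])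
  -- pointwise bound for |F|^{r'}
  have hbound : ∀ x, |(|u x| ^ (2 * σ) * u x - |v x| ^ (2 * σ) * v x)|
        ^ ((2 * σ + 2) / (2 * σ + 1))
      ≤ (2 * σ + 1) ^ ((2 * σ + 2) / (2 * σ + 1)) *
        ((|u x| ^ (2 * σ) + |v x| ^ (2 * σ)) ^ ((2 * σ + 2) / (2 * σ + 1)) *
          |u x - v x| ^ ((2 * σ + 2) / (2 * σ + 1))) := by
    intro x
    calc |(|u x| ^ (2 * σ) * u x - |v x| ^ (2 * σ) * v x)| ^ ((2 * σ + 2) / (2 * σ + 1))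
        ≤ ((2 * σ + 1) * (|u x| ^ (2 * σ) + |v x| ^ (2 * σ)) * |u x - v x|)
            ^ ((2 * σ + 2) / (2 * σ + 1)) :=
          Real.rpow_le_rpow (abs_nonneg _) (aux_pointwise σ hσ (u x) (v x)) hr'.le
      _ = _ := by
          rw [Real.mul_rpow (by positivity) (abs_nonneg _),
            Real.mul_rpow hC.le (by positivity), mul_assoc]
  have hF_int : Integrable
      (fun x => |(|u x| ^ (2 * σ) * u x - |v x| ^ (2 * σ) * v x)|
        ^ ((2 * σ + 2) / (2 * σ + 1))) (volume.restrict Ω) := by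
    refine Integrable.mono' (hk_int.const_mul ((2 * σ + 1) ^ ((2 * σ + 2) / (2 * σ + 1))))
      (hmF.abs.pow measurable_const).aestronglyMeasurable (Eventually.of_forall fun x => ?_)
    rw [Real.norm_of_nonneg (by positivity)]
    exact hbound x
  -- main integral estimate
  have hstep : (∫ x in Ω, |(|u x| ^ (2 * σ) * u x - |v x| ^ (2 * σ) * v x)|
        ^ ((2 * σ + 2) / (2 * σ + 1)))
      ≤ (2 * σ + 1) ^ ((2 * σ + 2) / (2 * σ + 1)) *
        ((∫ x in Ω, (|u x| ^ (2 * σ) + |v x| ^ (2 * σ)) ^ ((2 * σ + 2) / (2 * σ)))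
            ^ (1 / ((2 * σ + 1) / (2 * σ))) *
          (∫ x in Ω, |u x - v x| ^ (2 * σ + 2)) ^ (1 / (2 * σ + 1))) := by
    calc (∫ x in Ω, |(|u x| ^ (2 * σ) * u x - |v x| ^ (2 * σ) * v x)|
          ^ ((2 * σ + 2) / (2 * σ + 1)))
        ≤ ∫ x in Ω, (2 * σ + 1) ^ ((2 * σ + 2) / (2 * σ + 1)) *
            ((|u x| ^ (2 * σ) + |v x| ^ (2 * σ)) ^ ((2 * σ + 2) / (2 * σ + 1)) *
              |u x - v x| ^ ((2 * σ + 2) / (2 * σ + 1))) :=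
          integral_mono hF_int (hk_int.const_mul _) hbound
      _ = (2 * σ + 1) ^ ((2 * σ + 2) / (2 * σ + 1)) *
            ∫ x in Ω, (|u x| ^ (2 * σ) + |v x| ^ (2 * σ)) ^ ((2 * σ + 2) / (2 * σ + 1)) *
              |u x - v x| ^ ((2 * σ + 2) / (2 * σ + 1)) :=
          integral_const_mul _ _
      _ ≤ _ := mul_le_mul_of_nonneg_left hhold (by positivity)
  -- Minkowski step
  have hmu_mem : Integrable (fun x => (|u x| ^ (2 * σ)) ^ ((2 * σ + 2) / (2 * σ)))
      (volume.restrict Ω) := by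
    refine hur.congr (Eventually.of_forall fun x => ?_)
    beta_reduce
    rw [← Real.rpow_mul (abs_nonneg _), hsu]
  have hmv_mem : Integrable (fun x => (|v x| ^ (2 * σ)) ^ ((2 * σ + 2) / (2 * σ)))
      (volume.restrict Ω) := by
    refine hvr.congr (Eventually.of_forall fun x => ?_)
    beta_reduce
    rw [← Real.rpow_mul (abs_nonneg _), hsu]
  have hmink := aux_minkowski hmu2.aestronglyMeasurable hmv2.aestronglyMeasurable
    (fun x => by positivity) (fun x => by positivity) hp0 hmu_mem hmv_mem
  have hmink' : (∫ x in Ω, (|u x| ^ (2 * σ) + |v x| ^ (2 * σ)) ^ ((2 * σ + 2) / (2 * σ)))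
        ^ ((2 * σ) / (2 * σ + 2))
      ≤ (∫ x in Ω, |u x| ^ (2 * σ + 2)) ^ ((2 * σ) / (2 * σ + 2)) +
        (∫ x in Ω, |v x| ^ (2 * σ + 2)) ^ ((2 * σ) / (2 * σ + 2)) := by
    have h1 : (1:ℝ) / ((2 * σ + 2) / (2 * σ)) = (2 * σ) / (2 * σ + 2) := one_div_div _ _
    rw [← h1]
    have h2 : ∫ x in Ω, (|u x| ^ (2 * σ)) ^ ((2 * σ + 2) / (2 * σ))
        = ∫ x in Ω, |u x| ^ (2 * σ + 2) := by
      refine integral_congr_ae (Eventually.of_forall fun x => ?_)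
      beta_reduce
      rw [← Real.rpow_mul (abs_nonneg _), hsu]
    have h3 : ∫ x in Ω, (|v x| ^ (2 * σ)) ^ ((2 * σ + 2) / (2 * σ))
        = ∫ x in Ω, |v x| ^ (2 * σ + 2) := by
      refine integral_congr_ae (Eventually.of_forall fun x => ?_)
      beta_reduce
      rw [← Real.rpow_mul (abs_nonneg _), hsu]
    rw [← h2, ← h3]
    exact hmink
  -- exponent arithmetic
  have hXnn : (0:ℝ) ≤ ∫ x in Ω, (|u x| ^ (2 * σ) + |v x| ^ (2 * σ)) ^ ((2 * σ + 2) / (2 * σ)) :=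
    integral_nonneg fun x => by positivity
  have hYnn : (0:ℝ) ≤ ∫ x in Ω, |u x - v x| ^ (2 * σ + 2) :=
    integral_nonneg fun x => by positivity
  have hIunn : (0:ℝ) ≤ ∫ x in Ω, |u x| ^ (2 * σ + 2) := integral_nonneg fun x => by positivity
  have hIvnn : (0:ℝ) ≤ ∫ x in Ω, |v x| ^ (2 * σ + 2) := integral_nonneg fun x => by positivity
  have he1 : (2 * σ + 2) / (2 * σ + 1) * ((2 * σ + 1) / (2 * σ + 2)) = 1 := by
    field_simp
  have he2 : 1 / ((2 * σ + 1) / (2 * σ)) * ((2 * σ + 1) / (2 * σ + 2)) =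
      (2 * σ) / (2 * σ + 2) := by
    rw [one_div_div]; field_simp
  have he3 : 1 / (2 * σ + 1) * ((2 * σ + 1) / (2 * σ + 2)) = 1 / (2 * σ + 2) := by
    field_simp
  have hSu : ((∫ x in Ω, |u x| ^ (2 * σ + 2)) ^ (1 / (2 * σ + 2))) ^ (2 * σ)
      = (∫ x in Ω, |u x| ^ (2 * σ + 2)) ^ ((2 * σ) / (2 * σ + 2)) := by
    rw [← Real.rpow_mul hIunn]
    congr 1
    field_simp
  have hSv : ((∫ x in Ω, |v x| ^ (2 * σ + 2)) ^ (1 / (2 * σ + 2))) ^ (2 * σ)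
      = (∫ x in Ω, |v x| ^ (2 * σ + 2)) ^ ((2 * σ) / (2 * σ + 2)) := by
    rw [← Real.rpow_mul hIvnn]
    congr 1
    field_simp
  -- final computation
  calc (∫ x in Ω, |(|u x| ^ (2 * σ) * u x - |v x| ^ (2 * σ) * v x)|
        ^ ((2 * σ + 2) / (2 * σ + 1))) ^ ((2 * σ + 1) / (2 * σ + 2))
      ≤ ((2 * σ + 1) ^ ((2 * σ + 2) / (2 * σ + 1)) *
          ((∫ x in Ω, (|u x| ^ (2 * σ) + |v x| ^ (2 * σ)) ^ ((2 * σ + 2) / (2 * σ)))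
              ^ (1 / ((2 * σ + 1) / (2 * σ))) *
            (∫ x in Ω, |u x - v x| ^ (2 * σ + 2)) ^ (1 / (2 * σ + 1))))
          ^ ((2 * σ + 1) / (2 * σ + 2)) :=
        Real.rpow_le_rpow (integral_nonneg fun x => by positivity) hstep (by positivity)
    _ = (2 * σ + 1) *
          ((∫ x in Ω, (|u x| ^ (2 * σ) + |v x| ^ (2 * σ)) ^ ((2 * σ + 2) / (2 * σ)))
              ^ ((2 * σ) / (2 * σ + 2)) *
            (∫ x in Ω, |u x - v x| ^ (2 * σ + 2)) ^ (1 / (2 * σ + 2))) := by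
        rw [Real.mul_rpow (by positivity) (by positivity),
          Real.mul_rpow (by positivity) (by positivity),
          ← Real.rpow_mul hC.le, ← Real.rpow_mul hXnn, ← Real.rpow_mul hYnn,
          he1, he2, he3, Real.rpow_one]
    _ ≤ (2 * σ + 1) *
          (((∫ x in Ω, |u x| ^ (2 * σ + 2)) ^ ((2 * σ) / (2 * σ + 2)) +
            (∫ x in Ω, |v x| ^ (2 * σ + 2)) ^ ((2 * σ) / (2 * σ + 2))) *
            (∫ x in Ω, |u x - v x| ^ (2 * σ + 2)) ^ (1 / (2 * σ + 2))) := by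
        gcongr
    _ = _ := by rw [hSu, hSv, mul_assoc]
end
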